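/- Let ε ∈ (0, 1/2], δ ∈ (0,1), and let G = (V,E) be a graph with m edges, MAX-CUT value OPT, and maximum degree Δ satisfying Δ < ε²δm/4 − 1/(4ε²). Let x* be an optimal MAX-CUT assignment, and let (Y_v) be independent ±1 random variables with Pr[Y_v = x*_v] = 1/2 + ε. Let X = |{(u,v) ∈ E : Y_u ≠ Y_v}|. Then Pr[X ≤ (1/2 + ε²)·OPT] < δ. -/

import Mathlib

open MeasureTheory ProbabilityTheory Finset

section Aux

variable {V Ω : Type*} [Fintype V] [DecidableEq V]

set_option linter.unusedSectionVars false

lemma cut_darts' (G : SimpleGraph V) [DecidableRel G.Adj] (y : V → ℤ)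
    (hy : ∀ v, y v = 1 ∨ y v = -1) :
    ∑ p ∈ univ.filter (fun p : V × V => G.Adj p.1 p.2),
        (1 - (y p.1 : ℝ) * (y p.2 : ℝ))
      = 4 * ((G.edgeFinset.filter (fun e => ¬ (e.map y).IsDiag)).card : ℝ) := by
  classical
  let H : SimpleGraph V :=
    { Adj := fun a b => G.Adj a b ∧ y a ≠ y b
      symm := ⟨fun a b hab => ⟨hab.1.symm, (Ne.symm hab.2)⟩⟩
      loopless := ⟨fun a ha => ha.2 rfl⟩ }
  letI hdec : DecidableRel H.Adj := fun a b => instDecidableAnd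
  have hHedge : H.edgeFinset = G.edgeFinset.filter (fun e => ¬ (e.map y).IsDiag) := by
    ext e
    induction e with
    | _ a b =>
      simp [H, SimpleGraph.mem_edgeFinset, SimpleGraph.mem_edgeSet, Sym2.map_pair_eq,
        Sym2.mk_isDiag_iff]
  have h2 := H.two_mul_card_edgeFinset
  have hterm : ∀ p ∈ univ.filter (fun p : V × V => G.Adj p.1 p.2),
      (1 - (y p.1 : ℝ) * (y p.2 : ℝ)) = if y p.1 ≠ y p.2 then 2 else 0 := by
    intro p _
    rcases hy p.1 with h1 | h1 <;> rcases hy p.2 with h2 | h2 <;>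
      simp [h1, h2] <;> norm_num
  rw [Finset.sum_congr rfl hterm]
  rw [Finset.sum_ite, Finset.sum_const, Finset.sum_const]
  rw [Finset.filter_filter]
  have h2' : 2 * #(G.edgeFinset.filter (fun e => ¬ (e.map y).IsDiag))
      = #(filter (fun a : V × V => G.Adj a.1 a.2 ∧ y a.1 ≠ y a.2) univ) := by
    rw [← hHedge]; exact h2
  simp only [nsmul_eq_mul, smul_zero, add_zero]
  have hnat : #(filter (fun a : V × V => G.Adj a.1 a.2 ∧ y a.1 ≠ y a.2) univ) * 2
      = 4 * #(G.edgeFinset.filter (fun e => ¬ (e.map y).IsDiag)) := by omega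
  exact_mod_cast hnat

lemma half_count' (a b : V) (hab : a ≠ b) :
    Fintype.card (V → Bool) = 2 * #(univ.filter fun f : V → Bool => f a ≠ f b) := by
  classical
  have hbij : #(univ.filter fun f : V → Bool => ¬ f a = f b)
      = #(univ.filter fun f : V → Bool => f a = f b) := by
    apply Finset.card_bij (fun f _ => Function.update f a (!f a))
    · intro f hf
      simp only [mem_filter, mem_univ, true_and] at hf ⊢
      rw [Function.update_self, Function.update_of_ne (Ne.symm hab)]
      cases hfa : f a <;> cases hfb : f b <;> simp_all
    · intro f hf g hg hfg
      funext v
      by_cases hv : v = a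
      · subst hv
        have h1 := congrFun hfg v
        simp only [Function.update_self] at h1
        cases hfa : f v <;> cases hga : g v <;> simp_all
      · have h1 := congrFun hfg v
        rw [Function.update_of_ne hv, Function.update_of_ne hv] at h1
        exact h1
    · intro f hf
      refine ⟨Function.update f a (!f a), ?_, ?_⟩
      · simp only [mem_filter, mem_univ, true_and] at hf ⊢
        rw [Function.update_self, Function.update_of_ne (Ne.symm hab)]
        cases hfa : f a <;> cases hfb : f b <;> simp_all
      · funext v
        by_cases hv : v = a
        · subst hv; simp
        · simp [Function.update_of_ne hv]
  have hsplit := Finset.card_filter_add_card_filter_not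
    (s := (univ : Finset (V → Bool))) (p := fun f => f a = f b)
  simp only [Finset.card_univ] at hsplit
  have h3 : #(univ.filter fun f : V → Bool => f a ≠ f b)
      = #(univ.filter fun f : V → Bool => ¬ f a = f b) := by
    congr 1
  rw [h3, hbij, ← hsplit, hbij, two_mul]

lemma exists_big_cut' (G : SimpleGraph V) [DecidableRel G.Adj] :
    ∃ y : V → ℤ, (∀ v, y v = 1 ∨ y v = -1) ∧
      #(G.edgeFinset) ≤ 2 * #(G.edgeFinset.filter fun e => ¬ (e.map y).IsDiag) := by
  classical
  have key : ∀ e ∈ G.edgeFinset,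
      Fintype.card (V → Bool) = 2 * #(univ.filter fun f : V → Bool =>
        ¬ (e.map (fun v => if f v then (1:ℤ) else -1)).IsDiag) := by
    intro e he
    induction e with
    | _ a b =>
      rw [SimpleGraph.mem_edgeFinset, SimpleGraph.mem_edgeSet] at he
      have hab : a ≠ b := he.ne
      have hpred : ∀ f : V → Bool,
          (¬ (Sym2.map (fun v => if f v then (1:ℤ) else -1) s(a,b)).IsDiag) ↔ f a ≠ f b := by
        intro f
        rw [Sym2.map_pair_eq, Sym2.mk_isDiag_iff]
        cases hfa : f a <;> cases hfb : f b <;> simp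
      rw [Finset.filter_congr (fun f _ => by rw [hpred f])]
      exact half_count' a b hab
  have hswap : ∑ f : V → Bool, #(G.edgeFinset.filter fun e =>
        ¬ (e.map (fun v => if f v then (1:ℤ) else -1)).IsDiag)
      = ∑ e ∈ G.edgeFinset, #(univ.filter fun f : V → Bool =>
        ¬ (e.map (fun v => if f v then (1:ℤ) else -1)).IsDiag) := by
    simp only [Finset.card_filter]
    rw [Finset.sum_comm]
  have hsum : ∑ f : V → Bool, #(G.edgeFinset) ≤ ∑ f : V → Bool,
      2 * #(G.edgeFinset.filter fun e =>
        ¬ (e.map (fun v => if f v then (1:ℤ) else -1)).IsDiag) := by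
    rw [← Finset.mul_sum, hswap, Finset.mul_sum, Finset.sum_const, Finset.card_univ]
    calc Fintype.card (V → Bool) • #(G.edgeFinset)
        = ∑ e ∈ G.edgeFinset, Fintype.card (V → Bool) := by
          rw [Finset.sum_const, smul_eq_mul, smul_eq_mul, mul_comm]
      _ ≤ _ := Finset.sum_le_sum (fun e he => (key e he).le)
  obtain ⟨f, -, hf⟩ := Finset.exists_le_of_sum_le Finset.univ_nonempty hsum
  exact ⟨fun v => if f v then (1:ℤ) else -1, fun v => by by_cases h : f v <;> simp [h], hf⟩

end Aux

section MT

variable {V Ω : Type*} [MeasurableSpace Ω] {μ : Measure Ω} [IsProbabilityMeasure μ]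

set_option linter.unusedSectionVars false

lemma bdd_memLp' {f : Ω → ℝ} (hf : Measurable f) (C : ℝ) (hC : ∀ ω, |f ω| ≤ C) :
    MemLp f 2 μ :=
  MemLp.of_bound hf.aestronglyMeasurable C
    (Filter.Eventually.of_forall (by simpa [Real.norm_eq_abs] using hC))

lemma bdd_integrable' {f : Ω → ℝ} (hf : Measurable f) (C : ℝ) (hC : ∀ ω, |f ω| ≤ C) :
    Integrable f μ :=
  (bdd_memLp' hf C hC).integrable one_le_two

variable (ε : ℝ) (xstar : V → ℤ) (Y : V → Ω → ℤ)

lemma S_abs' (hYval : ∀ v ω, Y v ω = 1 ∨ Y v ω = -1) (v : V) (ω : Ω) :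
    |(Y v ω : ℝ)| ≤ 1 := by
  rcases hYval v ω with h | h <;> simp [h]

lemma S_meas' (hYmeas : ∀ v, Measurable (Y v)) (v : V) :
    Measurable (fun ω => (Y v ω : ℝ)) :=
  measurable_from_top.comp (hYmeas v)

lemma S_int' (hε0 : 0 < ε) (hε : ε ≤ 1/2)
    (hx : ∀ v, xstar v = 1 ∨ xstar v = -1)
    (hYmeas : ∀ v, Measurable (Y v)) (hYval : ∀ v ω, Y v ω = 1 ∨ Y v ω = -1)
    (hacc : ∀ v, μ {ω | Y v ω = xstar v} = ENNReal.ofReal (1/2 + ε)) (v : V) :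
    ∫ ω, (Y v ω : ℝ) ∂μ = 2 * ε * (xstar v : ℝ) := by
  classical
  set A : Set Ω := {ω | Y v ω = xstar v} with hA
  have hAmeas : MeasurableSet A := (hYmeas v) (measurableSet_singleton _)
  have hfun : (fun ω => (Y v ω : ℝ))
      = fun ω => A.indicator (fun _ => 2 * (xstar v : ℝ)) ω - (xstar v : ℝ) := by
    funext ω
    by_cases hω : ω ∈ A
    · rw [Set.indicator_of_mem hω]
      have : Y v ω = xstar v := hω
      rw [this]; ring
    · rw [Set.indicator_of_notMem hω]
      have hne : Y v ω ≠ xstar v := hω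
      rcases hYval v ω with h | h <;> rcases hx v with h' | h' <;>
        simp_all
  rw [hfun, integral_sub ((integrable_const _).indicator hAmeas) (integrable_const _),
    integral_indicator_const _ hAmeas, integral_const]
  simp only [measure_univ, probReal_univ, ENNReal.toReal_one, one_smul, smul_eq_mul]
  rw [hA, measureReal_def, hacc v, ENNReal.toReal_ofReal (by linarith)]
  ring

lemma S_pair' (hε0 : 0 < ε) (hε : ε ≤ 1/2)
    (hx : ∀ v, xstar v = 1 ∨ xstar v = -1)
    (hYmeas : ∀ v, Measurable (Y v)) (hYval : ∀ v ω, Y v ω = 1 ∨ Y v ω = -1)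
    (hind : iIndepFun Y μ)
    (hacc : ∀ v, μ {ω | Y v ω = xstar v} = ENNReal.ofReal (1/2 + ε))
    {u v : V} (huv : u ≠ v) :
    ∫ ω, (Y u ω : ℝ) * (Y v ω : ℝ) ∂μ
      = 4 * ε^2 * (xstar u : ℝ) * (xstar v : ℝ) := by
  have hiu : IndepFun (fun ω => (Y u ω : ℝ)) (fun ω => (Y v ω : ℝ)) μ :=
    (hind.indepFun huv).comp measurable_from_top measurable_from_top
  have h := hiu.integral_mul_eq_mul_integral
    (bdd_integrable' (S_meas' Y hYmeas u) 1 (S_abs' Y hYval u)).aestronglyMeasurable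
    (bdd_integrable' (S_meas' Y hYmeas v) 1 (S_abs' Y hYval v)).aestronglyMeasurable
  have h2 : ∫ ω, (Y u ω : ℝ) * (Y v ω : ℝ) ∂μ
      = (∫ ω, (Y u ω : ℝ) ∂μ) * ∫ ω, (Y v ω : ℝ) ∂μ := h
  rw [h2, S_int' ε xstar Y hε0 hε hx hYmeas hYval hacc u,
    S_int' ε xstar Y hε0 hε hx hYmeas hYval hacc v]
  ring

lemma S_four' (hε0 : 0 < ε) (hε : ε ≤ 1/2)
    (hx : ∀ v, xstar v = 1 ∨ xstar v = -1)
    (hYmeas : ∀ v, Measurable (Y v)) (hYval : ∀ v ω, Y v ω = 1 ∨ Y v ω = -1)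
    (hind : iIndepFun Y μ)
    (hacc : ∀ v, μ {ω | Y v ω = xstar v} = ENNReal.ofReal (1/2 + ε))
    {a b c d : V} (hab : a ≠ b) (hcd : c ≠ d)
    (hac : a ≠ c) (had : a ≠ d) (hbc : b ≠ c) (hbd : b ≠ d) :
    ∫ ω, ((Y a ω : ℝ) * (Y b ω : ℝ)) * ((Y c ω : ℝ) * (Y d ω : ℝ)) ∂μ
      = (4 * ε^2 * (xstar a : ℝ) * (xstar b : ℝ)) * (4 * ε^2 * (xstar c : ℝ) * (xstar d : ℝ)) := by
  have hpair := hind.indepFun_prodMk_prodMk hYmeas a b c d hac had hbc hbd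
  have hmul : Measurable (fun p : ℤ × ℤ => (p.1 : ℝ) * (p.2 : ℝ)) :=
    (measurable_from_top.comp measurable_fst).mul (measurable_from_top.comp measurable_snd)
  have hi : IndepFun (fun ω => (Y a ω : ℝ) * (Y b ω : ℝ))
      (fun ω => (Y c ω : ℝ) * (Y d ω : ℝ)) μ := hpair.comp hmul hmul
  have habs : ∀ (u v : V) (ω : Ω), |(Y u ω : ℝ) * (Y v ω : ℝ)| ≤ 1 := by
    intro u v ω
    rw [abs_mul]
    calc |(Y u ω : ℝ)| * |(Y v ω : ℝ)| ≤ 1 * 1 :=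
      mul_le_mul (S_abs' Y hYval u ω) (S_abs' Y hYval v ω) (abs_nonneg _) zero_le_one
    _ = 1 := one_mul 1
  have h := hi.integral_mul_eq_mul_integral
    (bdd_integrable' ((S_meas' Y hYmeas a).mul (S_meas' Y hYmeas b)) 1 (habs a b)).aestronglyMeasurable
    (bdd_integrable' ((S_meas' Y hYmeas c).mul (S_meas' Y hYmeas d)) 1 (habs c d)).aestronglyMeasurable
  have h2 : ∫ ω, ((Y a ω : ℝ) * (Y b ω : ℝ)) * ((Y c ω : ℝ) * (Y d ω : ℝ)) ∂μ
      = (∫ ω, (Y a ω : ℝ) * (Y b ω : ℝ) ∂μ) * ∫ ω, (Y c ω : ℝ) * (Y d ω : ℝ) ∂μ := h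
  rw [h2, S_pair' ε xstar Y hε0 hε hx hYmeas hYval hind hacc hab,
    S_pair' ε xstar Y hε0 hε hx hYmeas hYval hind hacc hcd]

end MT

set_option maxHeartbeats 2000000 in
theorem stmt8 {V Ω : Type*} [Fintype V] [DecidableEq V]
    [MeasurableSpace Ω] (μ : Measure Ω) [IsProbabilityMeasure μ]
    (G : SimpleGraph V) [DecidableRel G.Adj]
    (ε δ : ℝ) (hε0 : 0 < ε) (hε : ε ≤ 1/2) (hδ0 : 0 < δ) (hδ1 : δ < 1)
    (xstar : V → ℤ) (hx : ∀ v, xstar v = 1 ∨ xstar v = -1)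
    -- xstar is an optimal MAX-CUT assignment
    (hopt : ∀ y : V → ℤ, (∀ v, y v = 1 ∨ y v = -1) →
      (G.edgeFinset.filter (fun e => ¬ (e.map y).IsDiag)).card ≤
        (G.edgeFinset.filter (fun e => ¬ (e.map xstar).IsDiag)).card)
    (Y : V → Ω → ℤ) (hYmeas : ∀ v, Measurable (Y v))
    (hYval : ∀ v ω, Y v ω = 1 ∨ Y v ω = -1)
    (hind : iIndepFun Y μ)
    (hacc : ∀ v, μ {ω | Y v ω = xstar v} = ENNReal.ofReal (1/2 + ε))
    (m OPT : ℕ)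
    (hm : m = G.edgeFinset.card)
    (hOPT : OPT = (G.edgeFinset.filter (fun e => ¬ (e.map xstar).IsDiag)).card)
    (hΔ : (G.maxDegree : ℝ) < ε^2 * δ * m / 4 - 1 / (4 * ε^2))
    (X : Ω → ℝ)
    (hX : ∀ ω, X ω =
      ((G.edgeFinset.filter (fun e => ¬ (e.map (fun v => Y v ω)).IsDiag)).card : ℝ)) :
    μ {ω | X ω ≤ (1/2 + ε^2) * OPT} < ENNReal.ofReal δ := by
  classical
  set A : Finset (V × V) := univ.filter (fun p : V × V => G.Adj p.1 p.2) with hAdef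
  set S : V → Ω → ℝ := fun v ω => ((Y v ω : ℤ) : ℝ) with hSdef
  set xr : V → ℝ := fun v => ((xstar v : ℤ) : ℝ) with hxrdef
  -- basic facts about A
  have hpne : ∀ p ∈ A, p.1 ≠ p.2 := by
    intro p hp
    exact ((Finset.mem_filter.mp hp).2).ne
  have hAcard : #A = 2 * m := by
    rw [hm, ← G.two_mul_card_edgeFinset]
  -- X as a sum over darts
  have hXdart : ∀ ω, X ω = (1/4) * ∑ p ∈ A, (1 - S p.1 ω * S p.2 ω) := by
    intro ω
    have h := cut_darts' G (fun v => Y v ω) (fun v => hYval v ω)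
    rw [hX ω]
    simp only [hSdef, hAdef]
    linarith [h]
  have hOPTdart : (OPT : ℝ) = (1/4) * ∑ p ∈ A, (1 - xr p.1 * xr p.2) := by
    have h := cut_darts' G xstar hx
    rw [hOPT]
    simp only [hxrdef, hAdef]
    push_cast
    linarith [h]
  -- pointwise facts
  have hSmeas : ∀ v, Measurable (fun ω => S v ω) := fun v => S_meas' Y hYmeas v
  have hSabs : ∀ v ω, |S v ω| ≤ 1 := fun v ω => S_abs' Y hYval v ω
  have hSsq : ∀ v ω, S v ω * S v ω = 1 := by
    intro v ω; rcases hYval v ω with h | h <;> simp [hSdef, h]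
  have hxr1 : ∀ v, xr v = 1 ∨ xr v = -1 := by
    intro v; rcases hx v with h | h
    · left; simp [hxrdef, h]
    · right; simp [hxrdef, h]
  have hxrabs : ∀ v, |xr v| ≤ 1 := by
    intro v; rcases hxr1 v with h | h <;> simp [h]
  have hxrsq : ∀ v, xr v * xr v = 1 := by
    intro v; rcases hxr1 v with h | h <;> simp [h]
  have hprodabs : ∀ p : V × V, ∀ ω, |S p.1 ω * S p.2 ω| ≤ 1 := by
    intro p ω
    rw [abs_mul]
    calc |S p.1 ω| * |S p.2 ω| ≤ 1 * 1 :=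
      mul_le_mul (hSabs p.1 ω) (hSabs p.2 ω) (abs_nonneg _) zero_le_one
    _ = 1 := one_mul 1
  have hprodint : ∀ p : V × V, Integrable (fun ω => S p.1 ω * S p.2 ω) μ := by
    intro p
    exact bdd_integrable' ((hSmeas p.1).mul (hSmeas p.2)) 1 (hprodabs p)
  have htermint : ∀ p : V × V, Integrable (fun ω => 1 - S p.1 ω * S p.2 ω) μ := by
    intro p
    exact (integrable_const 1).sub (hprodint p)
  -- the pair integral in terms of S
  have hSpair : ∀ {a b : V}, a ≠ b →
      ∫ ω, S a ω * S b ω ∂μ = 4 * ε^2 * xr a * xr b := by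
    intro a b hab
    have h := S_pair' ε xstar Y hε0 hε hx hYmeas hYval hind hacc hab
    simp only [hSdef, hxrdef]
    exact h
  have hSfour : ∀ {a b c d : V}, a ≠ b → c ≠ d → a ≠ c → a ≠ d → b ≠ c → b ≠ d →
      ∫ ω, (S a ω * S b ω) * (S c ω * S d ω) ∂μ
        = (4 * ε^2 * xr a * xr b) * (4 * ε^2 * xr c * xr d) := by
    intro a b c d hab hcd hac had hbc hbd
    have h := S_four' ε xstar Y hε0 hε hx hYmeas hYval hind hacc hab hcd hac had hbc hbd
    simp only [hSdef, hxrdef]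
    exact h
  -- expectation of X
  have hEX : μ[X] = (1/4) * ∑ p ∈ A, (1 - 4 * ε^2 * xr p.1 * xr p.2) := by
    have h1 : μ[X] = ∫ ω, (1/4) * ∑ p ∈ A, (1 - S p.1 ω * S p.2 ω) ∂μ := by
      apply integral_congr_ae
      exact Filter.Eventually.of_forall hXdart
    rw [h1, integral_const_mul, integral_finset_sum _ (fun p _ => htermint p)]
    congr 1
    apply Finset.sum_congr rfl
    intro p hp
    rw [integral_sub (integrable_const 1) (hprodint p), integral_const]
    simp only [measure_univ, probReal_univ, ENNReal.toReal_one, smul_eq_mul, one_mul]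
    rw [hSpair (hpne p hp)]
  have hu0 : 0 < ε^2 := by positivity
  have hu4 : ε^2 ≤ 1/4 := by nlinarith
  have hQ : ∑ p ∈ A, xr p.1 * xr p.2 = 2 * (m:ℝ) - 4 * (OPT:ℝ) := by
    have h := hOPTdart
    rw [Finset.sum_sub_distrib, Finset.sum_const, hAcard] at h
    simp only [nsmul_eq_mul, mul_one] at h
    push_cast at h ⊢
    linarith
  have hEXval : μ[X] = (1/2 - 2*ε^2) * (m:ℝ) + 4 * ε^2 * (OPT:ℝ) := by
    rw [hEX]
    have hsplit : ∑ p ∈ A, (1 - 4 * ε^2 * xr p.1 * xr p.2)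
        = ∑ p ∈ A, ((1 : ℝ)) - (4*ε^2) * ∑ p ∈ A, (xr p.1 * xr p.2) := by
      rw [Finset.mul_sum, ← Finset.sum_sub_distrib]
      apply Finset.sum_congr rfl
      intro p hp
      ring
    rw [hsplit, Finset.sum_const, hAcard, hQ]
    simp only [nsmul_eq_mul, mul_one]
    push_cast
    ring
  -- centered variables
  set C : V × V → Ω → ℝ := fun p ω => S p.1 ω * S p.2 ω - 4 * ε^2 * xr p.1 * xr p.2
    with hCdef
  have hCmeas : ∀ p, Measurable (C p) := by
    intro p
    exact ((hSmeas p.1).mul (hSmeas p.2)).sub measurable_const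
  have hxxabs : ∀ (a b : V), |xr a * xr b| ≤ 1 := by
    intro a b
    rw [abs_mul]
    calc |xr a| * |xr b| ≤ 1 * 1 :=
      mul_le_mul (hxrabs a) (hxrabs b) (abs_nonneg _) zero_le_one
    _ = 1 := one_mul 1
  have hCabs : ∀ p ω, |C p ω| ≤ 2 := by
    intro p ω
    rw [hCdef]
    have h1 := hprodabs p ω
    have h2 := hxxabs p.1 p.2
    have h3 : |4 * ε^2 * xr p.1 * xr p.2| ≤ 1 := by
      have : 4 * ε^2 * xr p.1 * xr p.2 = (4*ε^2) * (xr p.1 * xr p.2) := by ring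
      rw [this, abs_mul, abs_of_nonneg (by positivity : (0:ℝ) ≤ 4*ε^2)]
      nlinarith [abs_nonneg (xr p.1 * xr p.2)]
    calc |S p.1 ω * S p.2 ω - 4 * ε^2 * xr p.1 * xr p.2|
        ≤ |S p.1 ω * S p.2 ω| + |4 * ε^2 * xr p.1 * xr p.2| := abs_sub _ _
    _ ≤ 2 := by linarith
  have hCCint : ∀ p q, Integrable (fun ω => C p ω * C q ω) μ := by
    intro p q
    apply bdd_integrable' ((hCmeas p).mul (hCmeas q)) 4
    intro ω
    show |C p ω * C q ω| ≤ 4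
    rw [abs_mul]
    calc |C p ω| * |C q ω| ≤ 2 * 2 :=
      mul_le_mul (hCabs p ω) (hCabs q ω) (abs_nonneg _) (by norm_num)
    _ = 4 := by norm_num
  -- X is in L2
  have hXmeas : Measurable X := by
    have : X = fun ω => (1/4) * ∑ p ∈ A, (1 - S p.1 ω * S p.2 ω) := funext hXdart
    rw [this]
    apply Measurable.const_mul
    apply Finset.measurable_sum
    intro p _
    exact measurable_const.sub ((hSmeas p.1).mul (hSmeas p.2))
  have hXL2 : MemLp X 2 μ := by
    apply bdd_memLp' hXmeas (m:ℝ)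
    intro ω
    rw [hX ω, hm, abs_of_nonneg (by positivity)]
    exact_mod_cast Finset.card_le_card (Finset.filter_subset _ _)
  -- variance as a double sum
  have hdev : ∀ ω, X ω - μ[X] = -(1/4) * ∑ p ∈ A, C p ω := by
    intro ω
    rw [hXdart ω, hEX, ← mul_sub, ← Finset.sum_sub_distrib]
    have h : ∀ p ∈ A, (1 - S p.1 ω * S p.2 ω) - (1 - 4 * ε^2 * xr p.1 * xr p.2)
        = -(C p ω) := by
      intro p _
      rw [hCdef]
      ring
    rw [Finset.sum_congr rfl h, Finset.sum_neg_distrib]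
    ring
  have hvar : variance X μ = (1/16) * ∑ p ∈ A, ∑ q ∈ A, ∫ ω, C p ω * C q ω ∂μ := by
    rw [variance_eq_integral hXmeas.aemeasurable,
      show (fun ω => (X ω - μ[X]) ^ 2) = ((X - fun _ => μ[X]) ^ (2:ℕ) : Ω → ℝ) from rfl]
    have h1 : ((X - fun _ => μ[X]) ^ (2:ℕ) : Ω → ℝ)
        = fun ω => (1/16) * ∑ p ∈ A, ∑ q ∈ A, C p ω * C q ω := by
      funext ω
      simp only [Pi.pow_apply, Pi.sub_apply]
      rw [hdev ω]
      rw [mul_pow, ← Finset.sum_mul_sum]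
      ring
    rw [h1, integral_const_mul, integral_finset_sum _
      (fun p _ => integrable_finset_sum _ (fun q _ => hCCint p q))]
    congr 1
    apply Finset.sum_congr rfl
    intro p _
    rw [integral_finset_sum _ (fun q _ => hCCint p q)]
  -- the covariance integrals
  have hcovsplit : ∀ p ∈ A, ∀ q ∈ A, ∫ ω, C p ω * C q ω ∂μ
      = (∫ ω, (S p.1 ω * S p.2 ω) * (S q.1 ω * S q.2 ω) ∂μ)
        - (4 * ε^2 * xr p.1 * xr p.2) * (4 * ε^2 * xr q.1 * xr q.2) := by
    intro p hp q hq
    have hfeq : (fun ω => C p ω * C q ω)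
        = fun ω => ((S p.1 ω * S p.2 ω) * (S q.1 ω * S q.2 ω)
            - (4 * ε^2 * xr p.1 * xr p.2) * (S q.1 ω * S q.2 ω))
          - ((4 * ε^2 * xr q.1 * xr q.2) * (S p.1 ω * S p.2 ω)
            - (4 * ε^2 * xr p.1 * xr p.2) * (4 * ε^2 * xr q.1 * xr q.2)) := by
      funext ω
      rw [hCdef]
      ring
    have hint1 : Integrable (fun ω => (S p.1 ω * S p.2 ω) * (S q.1 ω * S q.2 ω)) μ := by
      apply bdd_integrable' (((hSmeas p.1).mul (hSmeas p.2)).mul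
        ((hSmeas q.1).mul (hSmeas q.2))) 1
      intro ω
      show |(S p.1 ω * S p.2 ω) * (S q.1 ω * S q.2 ω)| ≤ 1
      rw [abs_mul]
      calc |S p.1 ω * S p.2 ω| * |S q.1 ω * S q.2 ω| ≤ 1 * 1 :=
        mul_le_mul (hprodabs p ω) (hprodabs q ω) (abs_nonneg _) zero_le_one
      _ = 1 := one_mul 1
    have hintC : Integrable (fun ω => (4 * ε^2 * xr p.1 * xr p.2) * (S q.1 ω * S q.2 ω)) μ :=
      (hprodint q).const_mul _
    have hintD : Integrable (fun ω => (4 * ε^2 * xr q.1 * xr q.2) * (S p.1 ω * S p.2 ω)) μ :=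
      (hprodint p).const_mul _
    have hintE : Integrable (fun _ : Ω =>
      (4 * ε^2 * xr p.1 * xr p.2) * (4 * ε^2 * xr q.1 * xr q.2)) μ := integrable_const _
    have hintA : Integrable (fun ω => (S p.1 ω * S p.2 ω) * (S q.1 ω * S q.2 ω)
        - (4 * ε^2 * xr p.1 * xr p.2) * (S q.1 ω * S q.2 ω)) μ := hint1.sub hintC
    have hintB : Integrable (fun ω => (4 * ε^2 * xr q.1 * xr q.2) * (S p.1 ω * S p.2 ω)
        - (4 * ε^2 * xr p.1 * xr p.2) * (4 * ε^2 * xr q.1 * xr q.2)) μ := hintD.sub hintE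
    rw [hfeq, integral_sub hintA hintB, integral_sub hint1 hintC,
      integral_sub hintD hintE,
      integral_const_mul, integral_const_mul, integral_const]
    simp only [measure_univ, probReal_univ, ENNReal.toReal_one, smul_eq_mul, one_mul]
    rw [hSpair (hpne p hp), hSpair (hpne q hq)]
    ring
  have hε4 : ε^4 ≤ 1/16 := by
    have h := pow_le_pow_left₀ hε0.le hε 4
    norm_num at h
    exact h
  have hβ0 : (0:ℝ) ≤ 4*ε^2 - 16*ε^4 := by nlinarith [hu0, hu4]
  have h16 : (0:ℝ) ≤ 1 - 16*ε^4 := by linarith [hε4]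
  have hcovbnd : ∀ p ∈ A, ∀ q ∈ A, ∫ ω, C p ω * C q ω ∂μ
      ≤ (if q = p ∨ q = p.swap then 1 - 16*ε^4 else 0)
        + (if p.1 = q.1 ∨ p.1 = q.2 ∨ p.2 = q.1 ∨ p.2 = q.2 then 4*ε^2 - 16*ε^4 else 0) := by
    intro p hp q hq
    have hp12 := hpne p hp
    have hq12 := hpne q hq
    rw [hcovsplit p hp q hq]
    by_cases hsame : q = p ∨ q = p.swap
    · -- same edge
      have hSS1 : (fun ω => (S p.1 ω * S p.2 ω) * (S q.1 ω * S q.2 ω))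
          = fun _ : Ω => (1:ℝ) := by
        funext ω
        rcases hsame with h | h
        · subst h
          calc (S q.1 ω * S q.2 ω) * (S q.1 ω * S q.2 ω)
              = (S q.1 ω * S q.1 ω) * (S q.2 ω * S q.2 ω) := by ring
            _ = 1 := by rw [hSsq, hSsq]; norm_num
        · subst h
          simp only [Prod.fst_swap, Prod.snd_swap]
          calc (S p.1 ω * S p.2 ω) * (S p.2 ω * S p.1 ω)
              = (S p.1 ω * S p.1 ω) * (S p.2 ω * S p.2 ω) := by ring
            _ = 1 := by rw [hSsq, hSsq]; norm_num
      have hkk : (4 * ε^2 * xr p.1 * xr p.2) * (4 * ε^2 * xr q.1 * xr q.2) = 16*ε^4 := by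
        rcases hsame with h | h
        · subst h
          calc (4 * ε^2 * xr q.1 * xr q.2) * (4 * ε^2 * xr q.1 * xr q.2)
              = 16*ε^4 * ((xr q.1 * xr q.1) * (xr q.2 * xr q.2)) := by ring
            _ = 16*ε^4 := by rw [hxrsq, hxrsq]; ring
        · subst h
          simp only [Prod.fst_swap, Prod.snd_swap]
          calc (4 * ε^2 * xr p.1 * xr p.2) * (4 * ε^2 * xr p.2 * xr p.1)
              = 16*ε^4 * ((xr p.1 * xr p.1) * (xr p.2 * xr p.2)) := by ring
            _ = 16*ε^4 := by rw [hxrsq, hxrsq]; ring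
      rw [hSS1, hkk, integral_const]
      simp only [measure_univ, probReal_univ, ENNReal.toReal_one, smul_eq_mul, one_mul]
      rw [if_pos hsame]
      have htouch : p.1 = q.1 ∨ p.1 = q.2 ∨ p.2 = q.1 ∨ p.2 = q.2 := by
        rcases hsame with h | h
        · left; rw [h]
        · right; left; rw [h, Prod.snd_swap]
      rw [if_pos htouch]
      linarith
    · by_cases htouch : p.1 = q.1 ∨ p.1 = q.2 ∨ p.2 = q.1 ∨ p.2 = q.2
      · rw [if_neg hsame, if_pos htouch, zero_add]
        have hqp : q ≠ p := fun h => hsame (Or.inl h)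
        have hqs : q ≠ p.swap := fun h => hsame (Or.inr h)
        -- in each sub-case the integral is a pair integral
        have main : ∃ a b : V, a ≠ b ∧
            (∫ ω, (S p.1 ω * S p.2 ω) * (S q.1 ω * S q.2 ω) ∂μ
              = 4 * ε^2 * xr a * xr b)
            ∧ (4 * ε^2 * xr p.1 * xr p.2) * (4 * ε^2 * xr q.1 * xr q.2)
              = 16 * ε^4 * (xr a * xr b) := by
          rcases htouch with h | h | h | h
          · -- p.1 = q.1
            refine ⟨p.2, q.2, ?_, ?_, ?_⟩
            · intro hcon
              exact hqp (Prod.ext h.symm hcon.symm)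
            · have heq : (fun ω => (S p.1 ω * S p.2 ω) * (S q.1 ω * S q.2 ω))
                  = fun ω => S p.2 ω * S q.2 ω := by
                funext ω
                rw [← h]
                calc (S p.1 ω * S p.2 ω) * (S p.1 ω * S q.2 ω)
                    = (S p.1 ω * S p.1 ω) * (S p.2 ω * S q.2 ω) := by ring
                  _ = S p.2 ω * S q.2 ω := by rw [hSsq]; ring
              rw [heq]
              exact hSpair (by intro hcon; exact hqp (Prod.ext h.symm hcon.symm))
            · rw [← h]
              calc (4 * ε^2 * xr p.1 * xr p.2) * (4 * ε^2 * xr p.1 * xr q.2)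
                  = 16*ε^4 * (xr p.1 * xr p.1) * (xr p.2 * xr q.2) := by ring
                _ = 16 * ε^4 * (xr p.2 * xr q.2) := by rw [hxrsq]; ring
          · -- p.1 = q.2
            refine ⟨p.2, q.1, ?_, ?_, ?_⟩
            · intro hcon
              exact hqs (Prod.ext hcon.symm h.symm)
            · have heq : (fun ω => (S p.1 ω * S p.2 ω) * (S q.1 ω * S q.2 ω))
                  = fun ω => S p.2 ω * S q.1 ω := by
                funext ω
                rw [← h]
                calc (S p.1 ω * S p.2 ω) * (S q.1 ω * S p.1 ω)
                    = (S p.1 ω * S p.1 ω) * (S p.2 ω * S q.1 ω) := by ring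
                  _ = S p.2 ω * S q.1 ω := by rw [hSsq]; ring
              rw [heq]
              exact hSpair (by intro hcon; exact hqs (Prod.ext hcon.symm h.symm))
            · rw [← h]
              calc (4 * ε^2 * xr p.1 * xr p.2) * (4 * ε^2 * xr q.1 * xr p.1)
                  = 16*ε^4 * (xr p.1 * xr p.1) * (xr p.2 * xr q.1) := by ring
                _ = 16 * ε^4 * (xr p.2 * xr q.1) := by rw [hxrsq]; ring
          · -- p.2 = q.1
            refine ⟨p.1, q.2, ?_, ?_, ?_⟩
            · intro hcon
              exact hqs (Prod.ext h.symm hcon.symm)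
            · have heq : (fun ω => (S p.1 ω * S p.2 ω) * (S q.1 ω * S q.2 ω))
                  = fun ω => S p.1 ω * S q.2 ω := by
                funext ω
                rw [← h]
                calc (S p.1 ω * S p.2 ω) * (S p.2 ω * S q.2 ω)
                    = (S p.2 ω * S p.2 ω) * (S p.1 ω * S q.2 ω) := by ring
                  _ = S p.1 ω * S q.2 ω := by rw [hSsq]; ring
              rw [heq]
              exact hSpair (by intro hcon; exact hqs (Prod.ext h.symm hcon.symm))
            · rw [← h]
              calc (4 * ε^2 * xr p.1 * xr p.2) * (4 * ε^2 * xr p.2 * xr q.2)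
                  = 16*ε^4 * (xr p.2 * xr p.2) * (xr p.1 * xr q.2) := by ring
                _ = 16 * ε^4 * (xr p.1 * xr q.2) := by rw [hxrsq]; ring
          · -- p.2 = q.2
            refine ⟨p.1, q.1, ?_, ?_, ?_⟩
            · intro hcon
              exact hqp (Prod.ext hcon.symm h.symm)
            · have heq : (fun ω => (S p.1 ω * S p.2 ω) * (S q.1 ω * S q.2 ω))
                  = fun ω => S p.1 ω * S q.1 ω := by
                funext ω
                rw [← h]
                calc (S p.1 ω * S p.2 ω) * (S q.1 ω * S p.2 ω)
                    = (S p.2 ω * S p.2 ω) * (S p.1 ω * S q.1 ω) := by ring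
                  _ = S p.1 ω * S q.1 ω := by rw [hSsq]; ring
              rw [heq]
              exact hSpair (by intro hcon; exact hqp (Prod.ext hcon.symm h.symm))
            · rw [← h]
              calc (4 * ε^2 * xr p.1 * xr p.2) * (4 * ε^2 * xr q.1 * xr p.2)
                  = 16*ε^4 * (xr p.2 * xr p.2) * (xr p.1 * xr q.1) := by ring
                _ = 16 * ε^4 * (xr p.1 * xr q.1) := by rw [hxrsq]; ring
        obtain ⟨a, b, hab, hval, hkk⟩ := main
        rw [hval, hkk]
        have habs := hxxabs a b
        rw [abs_le] at habs
        calc 4 * ε^2 * xr a * xr b - 16 * ε^4 * (xr a * xr b)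
            = (4*ε^2 - 16*ε^4) * (xr a * xr b) := by ring
          _ ≤ (4*ε^2 - 16*ε^4) * 1 := mul_le_mul_of_nonneg_left habs.2 hβ0
          _ = 4*ε^2 - 16*ε^4 := mul_one _
      · rw [if_neg hsame, if_neg htouch, add_zero]
        push_neg at htouch
        obtain ⟨h1, h2, h3, h4⟩ := htouch
        rw [hSfour hp12 hq12 h1 h2 h3 h4]
        have hz : (4 * ε^2 * xr p.1 * xr p.2) * (4 * ε^2 * xr q.1 * xr q.2)
            - 4 * ε^2 * xr p.1 * xr p.2 * (4 * ε^2 * xr q.1 * xr q.2) = 0 := by ring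
        linarith [hz]
  -- counting lemmas
  have hdeg1 : ∀ a : V, #(A.filter fun q => q.1 = a) ≤ G.maxDegree := by
    intro a
    calc #(A.filter fun q => q.1 = a) ≤ #(G.neighborFinset a) := by
          apply Finset.card_le_card_of_injOn (fun q => q.2)
          · intro q hq
            obtain ⟨hqA, hq1⟩ := Finset.mem_filter.mp hq
            have hadj : G.Adj q.1 q.2 := (Finset.mem_filter.mp hqA).2
            show q.2 ∈ G.neighborFinset a
            rw [SimpleGraph.mem_neighborFinset, ← hq1]
            exact hadj
          · intro q hq r hr hqr
            obtain ⟨-, hq1⟩ := Finset.mem_filter.mp hq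
            obtain ⟨-, hr1⟩ := Finset.mem_filter.mp hr
            exact Prod.ext (hq1.trans hr1.symm) hqr
      _ = G.degree a := G.card_neighborFinset_eq_degree a
      _ ≤ G.maxDegree := G.degree_le_maxDegree a
  have hdeg2 : ∀ a : V, #(A.filter fun q => q.2 = a) ≤ G.maxDegree := by
    intro a
    calc #(A.filter fun q => q.2 = a) ≤ #(G.neighborFinset a) := by
          apply Finset.card_le_card_of_injOn (fun q => q.1)
          · intro q hq
            obtain ⟨hqA, hq2⟩ := Finset.mem_filter.mp hq
            have hadj : G.Adj q.1 q.2 := (Finset.mem_filter.mp hqA).2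
            show q.1 ∈ G.neighborFinset a
            rw [SimpleGraph.mem_neighborFinset, ← hq2]
            exact hadj.symm
          · intro q hq r hr hqr
            obtain ⟨-, hq2⟩ := Finset.mem_filter.mp hq
            obtain ⟨-, hr2⟩ := Finset.mem_filter.mp hr
            exact Prod.ext hqr (hq2.trans hr2.symm)
      _ = G.degree a := G.card_neighborFinset_eq_degree a
      _ ≤ G.maxDegree := G.degree_le_maxDegree a
  -- row bound
  have hrow : ∀ p ∈ A, ∑ q ∈ A, ∫ ω, C p ω * C q ω ∂μ
      ≤ 2*(1 - 16*ε^4) + 4*(G.maxDegree:ℝ)*(4*ε^2 - 16*ε^4) := by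
    intro p hp
    refine le_trans (Finset.sum_le_sum (hcovbnd p hp)) ?_
    rw [Finset.sum_add_distrib]
    have hs1 : ∑ q ∈ A, (if q = p ∨ q = p.swap then (1 - 16*ε^4 : ℝ) else 0)
        ≤ 2*(1-16*ε^4) := by
      rw [← Finset.sum_filter]
      have hsub : A.filter (fun q => q = p ∨ q = p.swap) ⊆ {p, p.swap} := by
        intro q hq
        rcases (Finset.mem_filter.mp hq).2 with h | h
        · simp [h]
        · simp [h]
      have hc : #(A.filter (fun q => q = p ∨ q = p.swap)) ≤ 2 := by
        calc #(A.filter (fun q => q = p ∨ q = p.swap))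
            ≤ #({p, p.swap} : Finset (V × V)) := Finset.card_le_card hsub
          _ ≤ 2 := by
              refine le_trans (Finset.card_insert_le _ _) ?_
              simp
      have hcr : (#(A.filter (fun q => q = p ∨ q = p.swap)) : ℝ) ≤ 2 := by exact_mod_cast hc
      calc ∑ _q ∈ A.filter (fun q => q = p ∨ q = p.swap), (1 - 16*ε^4 : ℝ)
          = (#(A.filter (fun q => q = p ∨ q = p.swap)) : ℝ) * (1-16*ε^4) := by
            rw [Finset.sum_const, nsmul_eq_mul]
        _ ≤ 2 * (1-16*ε^4) := mul_le_mul_of_nonneg_right hcr h16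
    have hs2 : ∑ q ∈ A, (if p.1 = q.1 ∨ p.1 = q.2 ∨ p.2 = q.1 ∨ p.2 = q.2
          then (4*ε^2 - 16*ε^4 : ℝ) else 0)
        ≤ 4*(G.maxDegree:ℝ)*(4*ε^2-16*ε^4) := by
      rw [← Finset.sum_filter]
      have hsub : A.filter (fun q => p.1 = q.1 ∨ p.1 = q.2 ∨ p.2 = q.1 ∨ p.2 = q.2)
          ⊆ ((A.filter fun q => q.1 = p.1) ∪ (A.filter fun q => q.2 = p.1))
            ∪ ((A.filter fun q => q.1 = p.2) ∪ (A.filter fun q => q.2 = p.2)) := by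
        intro q hq
        obtain ⟨hqA, hcase⟩ := Finset.mem_filter.mp hq
        simp only [Finset.mem_union, Finset.mem_filter]
        rcases hcase with h|h|h|h
        · exact Or.inl (Or.inl ⟨hqA, h.symm⟩)
        · exact Or.inl (Or.inr ⟨hqA, h.symm⟩)
        · exact Or.inr (Or.inl ⟨hqA, h.symm⟩)
        · exact Or.inr (Or.inr ⟨hqA, h.symm⟩)
      have hcard : #(A.filter (fun q => p.1 = q.1 ∨ p.1 = q.2 ∨ p.2 = q.1 ∨ p.2 = q.2))
          ≤ 4 * G.maxDegree := by
        refine le_trans (Finset.card_le_card hsub) ?_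
        refine le_trans (Finset.card_union_le _ _) ?_
        have hu1 := Finset.card_union_le ((A.filter fun q => q.1 = p.1))
          ((A.filter fun q => q.2 = p.1))
        have hu2 := Finset.card_union_le ((A.filter fun q => q.1 = p.2))
          ((A.filter fun q => q.2 = p.2))
        have := hdeg1 p.1; have := hdeg2 p.1; have := hdeg1 p.2; have := hdeg2 p.2
        omega
      have hcr : (#(A.filter (fun q => p.1 = q.1 ∨ p.1 = q.2 ∨ p.2 = q.1 ∨ p.2 = q.2)) : ℝ)
          ≤ 4 * (G.maxDegree:ℝ) := by exact_mod_cast hcard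
      calc ∑ _q ∈ A.filter (fun q => p.1 = q.1 ∨ p.1 = q.2 ∨ p.2 = q.1 ∨ p.2 = q.2),
            (4*ε^2 - 16*ε^4 : ℝ)
          = (#(A.filter (fun q => p.1 = q.1 ∨ p.1 = q.2 ∨ p.2 = q.1 ∨ p.2 = q.2)) : ℝ)
              * (4*ε^2-16*ε^4) := by
            rw [Finset.sum_const, nsmul_eq_mul]
        _ ≤ 4*(G.maxDegree:ℝ) * (4*ε^2-16*ε^4) := mul_le_mul_of_nonneg_right hcr hβ0
    linarith [hs1, hs2]
  -- variance bound
  have hvarbound : variance X μ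
      ≤ (m:ℝ) * (1/4 - 4*ε^4 + 2*(G.maxDegree:ℝ)*ε^2*(1-4*ε^2)) := by
    rw [hvar]
    have h := Finset.sum_le_sum hrow
    rw [Finset.sum_const, hAcard, nsmul_eq_mul] at h
    have h2 : (1/16 : ℝ) * ∑ p ∈ A, ∑ q ∈ A, ∫ ω, C p ω * C q ω ∂μ
        ≤ (1/16) * ((((2*m : ℕ)) : ℝ) * (2*(1 - 16*ε^4) + 4*(G.maxDegree:ℝ)*(4*ε^2 - 16*ε^4))) := by
      apply mul_le_mul_of_nonneg_left h (by norm_num)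
    refine le_trans h2 ?_
    push_cast
    ring_nf
    apply le_of_eq
    ring
  -- size facts
  have hPler : (OPT:ℝ) ≤ (m:ℝ) := by
    have h : OPT ≤ m := by
      rw [hOPT, hm]; exact Finset.card_le_card (Finset.filter_subset _ _)
    exact_mod_cast h
  have hhalf : (m:ℝ) ≤ 2*(OPT:ℝ) := by
    obtain ⟨y, hy, hy2⟩ := exists_big_cut' G
    have h : m ≤ 2*OPT := by
      rw [hm, hOPT]
      have := hopt y hy
      omega
    exact_mod_cast h
  have hDR0 : (0:ℝ) ≤ (G.maxDegree:ℝ) := Nat.cast_nonneg _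
  have hinv0 : (0:ℝ) < 1/(4*ε^2) := by positivity
  have hM0 : (0:ℝ) < (m:ℝ) := by
    have h := lt_of_le_of_lt hDR0 hΔ
    nlinarith [mul_pos hu0 hδ0]
  have key1 : 1 + 4*ε^2*(G.maxDegree:ℝ) < ε^4*δ*(m:ℝ) := by
    have h := mul_lt_mul_of_pos_left hΔ (show (0:ℝ) < 4*ε^2 by positivity)
    have hid : 4*ε^2*(ε^2*δ*(m:ℝ)/4 - 1/(4*ε^2)) = ε^4*δ*(m:ℝ) - 1 := by
      field_simp
    rw [hid] at h
    linarith
  obtain ⟨T, hTdef⟩ : ∃ T : ℝ, T = μ[X] - (1/2 + ε^2) * (OPT:ℝ) := ⟨_, rfl⟩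
  have htv : T = (1/2-2*ε^2)*(m:ℝ) + (3*ε^2-1/2)*(OPT:ℝ) := by
    rw [hTdef, hEXval]; ring
  have hcases : 0 < T ∧ ε^4*(1-4*ε^2)*(m:ℝ)^2 ≤ 2*T^2
      ∧ ε^4*(1/4-4*ε^4)*(m:ℝ)^2 ≤ T^2 := by
    by_cases hc : 3*ε^2 ≤ 1/2
    · have hT1 : ε^2*(m:ℝ) ≤ T := by
        rw [htv]
        nlinarith [mul_le_mul_of_nonneg_left hPler (by linarith : (0:ℝ) ≤ 1/2 - 3*ε^2)]
      have hT0 : 0 < T := lt_of_lt_of_le (by positivity) hT1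
      have hsq : (ε^2*(m:ℝ))^2 ≤ T^2 := pow_le_pow_left₀ (by positivity) hT1 2
      constructor
      · exact hT0
      constructor
      · nlinarith [hsq, sq_nonneg (ε*(m:ℝ)), mul_nonneg (mul_nonneg hu0.le hu0.le) (sq_nonneg (m:ℝ)), hu0, hu4, sq_nonneg (m:ℝ), mul_nonneg (mul_nonneg (mul_nonneg hu0.le hu0.le) hu0.le) (sq_nonneg (m:ℝ))]
      · have haux : (0:ℝ) ≤ (3/4 + 4*ε^4) * (ε^4*(m:ℝ)^2) := by positivity
        linarith [hsq, haux]
    · push_neg at hc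
      have hT1 : (1-2*ε^2)*(m:ℝ)/4 ≤ T := by
        rw [htv]
        nlinarith [mul_le_mul_of_nonneg_left hhalf (by linarith : (0:ℝ) ≤ 3*ε^2 - 1/2)]
      have hpos4 : (0:ℝ) < (1-2*ε^2)*(m:ℝ)/4 := by
        have h12 : (0:ℝ) < 1-2*ε^2 := by linarith
        exact div_pos (mul_pos h12 hM0) (by norm_num)
      have hT0 : 0 < T := lt_of_lt_of_le hpos4 hT1
      have hsq : ((1-2*ε^2)*(m:ℝ)/4)^2 ≤ T^2 := pow_le_pow_left₀ hpos4.le hT1 2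
      have hin : (0:ℝ) ≤ 3 - 4*ε^2 - 32*ε^4 := by nlinarith [hu4, hu0, hε4]
      have hprod : (0:ℝ) ≤ (1/4 - ε^2)*(3 - 4*ε^2 - 32*ε^4) :=
        mul_nonneg (by linarith) hin
      have hF : 8*ε^4*(1-4*ε^2) ≤ (1-2*ε^2)^2 := by nlinarith [hprod]
      have hF2 : 16*ε^4*(1/4-4*ε^4) ≤ (1-2*ε^2)^2 := by nlinarith [hε4, hu0, hu4]
      refine ⟨hT0, ?_, ?_⟩
      · have hmul := mul_le_mul_of_nonneg_right hF (sq_nonneg (m:ℝ))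
        nlinarith [hsq, hmul]
      · have hmul := mul_le_mul_of_nonneg_right hF2 (sq_nonneg (m:ℝ))
        nlinarith [hsq, hmul]
  obtain ⟨hT0, hone, htwo⟩ := hcases
  have hT2 : (0:ℝ) < T^2 := by positivity
  have hvt : variance X μ < δ * T^2 := by
    have hstep1 : variance X μ * (ε^2*ε^2*(m:ℝ)) ≤ (1+4*ε^2*(G.maxDegree:ℝ)) * T^2 := by
      have hb2 := mul_le_mul_of_nonneg_right hvarbound
        (show (0:ℝ) ≤ ε^2*ε^2*(m:ℝ) by positivity)
      refine le_trans hb2 ?_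
      have hm1 := mul_le_mul_of_nonneg_left hone (mul_nonneg hDR0 hu0.le)
      linarith [htwo, hm1]
    have hstep2 : (1+4*ε^2*(G.maxDegree:ℝ)) * T^2 < (ε^2*ε^2*δ*(m:ℝ)) * T^2 := by
      apply mul_lt_mul_of_pos_right _ hT2
      nlinarith [key1]
    have hstep3 : variance X μ * (ε^2*ε^2*(m:ℝ)) < (δ*T^2) * (ε^2*ε^2*(m:ℝ)) := by
      calc variance X μ * (ε^2*ε^2*(m:ℝ)) ≤ (1+4*ε^2*(G.maxDegree:ℝ))*T^2 := hstep1
        _ < (ε^2*ε^2*δ*(m:ℝ))*T^2 := hstep2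
        _ = (δ*T^2)*(ε^2*ε^2*(m:ℝ)) := by ring
    exact lt_of_mul_lt_mul_right hstep3 (by positivity)
  -- Chebyshev
  have hcheb := meas_ge_le_variance_div_sq (μ := μ) hXL2 hT0
  have hsubset : {ω | X ω ≤ (1/2 + ε^2) * (OPT:ℝ)} ⊆ {ω | T ≤ |X ω - μ[X]|} := by
    intro ω hω
    simp only [Set.mem_setOf_eq] at hω ⊢
    have h1 : T ≤ μ[X] - X ω := by
      rw [hTdef]
      linarith [hω]
    calc T ≤ μ[X] - X ω := h1
      _ ≤ |X ω - μ[X]| := by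
          rw [abs_sub_comm]
          exact le_abs_self _
  calc μ {ω | X ω ≤ (1/2 + ε^2) * (OPT:ℝ)}
      ≤ μ {ω | T ≤ |X ω - μ[X]|} := measure_mono hsubset
    _ ≤ ENNReal.ofReal (variance X μ / T^2) := hcheb
    _ < ENNReal.ofReal δ := by
        rw [ENNReal.ofReal_lt_ofReal_iff hδ0, div_lt_iff₀ hT2]
        linarith [hvt]
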